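/- Fix j ≥ 2 and positive parameters. For every fixed I_1 ≥ 0 there exist unique real numbers S, S̃, R, I_2, …, I_j, Ĩ satisfying all of the equilibrium equations except the I_1-balance equation f·c_v·Ĩ·S/S̄ = (α_1+μ_1)·I_1; explicitly, I_k = c_{k−1}⋯c_1·I_1 for 2 ≤ k ≤ j, R = c_j·c_{j−1}⋯c_1·I_1 with c_j = γ/μ_r, S̃ = μ̃_s·S̄_v/(μ̃_s + (f·c·I_1/S̄)·ξ), Ĩ = S̄_v − S̃, and S = μ_s·S̄/(μ_s + f·c_v·Ĩ/S̄). -/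

import Mathlib

open Finset

/-- The coefficients `c_0 = 1`, `c_k = α_k/(α_{k+1}+μ_{k+1})` for `1 ≤ k ≤ j−2`, and
`c_{j−1} = α_{j−1}/(γ+μ_j)` of the relapsing host–vector model. -/
noncomputable def ccoef (j : ℕ) (γ : ℝ) (α μ : ℕ → ℝ) : ℕ → ℝ := fun k =>
  if k = 0 then 1
  else if k = j - 1 then α (j - 1) / (γ + μ j)
  else α k / (α (k + 1) + μ (k + 1))

/-- `ξ = Σ_{k=1}^{j} c_0·c_1⋯c_{k−1}`. -/
noncomputable def xiSum (j : ℕ) (γ : ℝ) (α μ : ℕ → ℝ) : ℝ :=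
  ∑ k ∈ Icc 1 j, ∏ l ∈ range k, ccoef j γ α μ l

/-- All of the equilibrium equations of the single host–vector relapsing disease model
with `j` infected compartments (constant populations `N = S̄`, `Ñ = S̄_v`) *except*
the `I_1`-balance equation `f·c_v·Ĩ·S/S̄ = (α_1+μ_1)·I_1`. -/
def IsEquilibNoI1 (j : ℕ) (f c cv γ Sb Sbv μs μr μts μt : ℝ) (α μ : ℕ → ℝ)
    (S R St It : ℝ) (I : ℕ → ℝ) : Prop :=
  μs * (Sb - S) = f * cv * It * S / Sb ∧
  (∀ k, 2 ≤ k → k ≤ j - 1 → α (k - 1) * I (k - 1) = (α k + μ k) * I k) ∧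
  α (j - 1) * I (j - 1) = (γ + μ j) * I j ∧
  γ * I j = μr * R ∧
  μts * (Sbv - St) = f * c * St / Sb * ∑ k ∈ Icc 1 j, I k ∧
  f * c * St / Sb * ∑ k ∈ Icc 1 j, I k = μt * It ∧
  It = Sbv - St

lemma ccoef_zero (j : ℕ) (γ : ℝ) (α μ : ℕ → ℝ) : ccoef j γ α μ 0 = 1 := by simp [ccoef]

lemma prod_range_ccoef (j : ℕ) (γ : ℝ) (α μ : ℕ → ℝ) (k : ℕ) (hk : 1 ≤ k) :
    ∏ l ∈ range k, ccoef j γ α μ l = ∏ l ∈ Icc 1 (k - 1), ccoef j γ α μ l := by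
  have h : range k = insert 0 (Icc 1 (k - 1)) := by
    ext x; simp only [Finset.mem_range, Finset.mem_insert, Finset.mem_Icc]; omega
  rw [h, Finset.prod_insert (by simp), ccoef_zero, one_mul]

lemma ccoef_pos (j : ℕ) (hj : 2 ≤ j) (γ : ℝ) (α μ : ℕ → ℝ) (hγ : 0 < γ)
    (hα : ∀ k, 1 ≤ k → k ≤ j - 1 → 0 < α k) (hμ : ∀ k, 1 ≤ k → k ≤ j → 0 < μ k) :
    ∀ l, l ≤ j - 1 → 0 < ccoef j γ α μ l := by
  intro l hl
  unfold ccoef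
  split
  · norm_num
  · split
    · exact div_pos (hα _ (by omega) (by omega)) (by linarith [hμ j (by omega) le_rfl])
    · rename_i h0 hj1
      exact div_pos (hα _ (by omega) (by omega))
        (by linarith [hα (l+1) (by omega) (by omega), hμ (l+1) (by omega) (by omega)])

lemma xiSum_pos (j : ℕ) (hj : 2 ≤ j) (γ : ℝ) (α μ : ℕ → ℝ) (hγ : 0 < γ)
    (hα : ∀ k, 1 ≤ k → k ≤ j - 1 → 0 < α k) (hμ : ∀ k, 1 ≤ k → k ≤ j → 0 < μ k) :
    0 < xiSum j γ α μ := by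
  unfold xiSum
  apply Finset.sum_pos
  · intro k hk
    simp only [Finset.mem_Icc] at hk
    exact Finset.prod_pos fun l hl =>
      ccoef_pos j hj γ α μ hγ hα hμ l (by simp only [Finset.mem_range] at hl; omega)
  · exact Finset.nonempty_Icc.mpr (by omega)

lemma I_formula (j : ℕ) (γ : ℝ) (α μ : ℕ → ℝ) (I : ℕ → ℝ) (I1 : ℝ) (h1 : I 1 = I1)
    (hrec : ∀ k, 2 ≤ k → k ≤ j → I k = ccoef j γ α μ (k - 1) * I (k - 1)) :
    ∀ k, 1 ≤ k → k ≤ j → I k = (∏ l ∈ Icc 1 (k - 1), ccoef j γ α μ l) * I1 := by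
  intro k
  induction k with
  | zero => omega
  | succ n ih =>
    intro hn1 hnj
    rcases Nat.eq_zero_or_pos n with h0 | h1'
    · subst h0; simpa using h1
    · obtain ⟨m, rfl⟩ : ∃ m, n = m + 1 := ⟨n - 1, by omega⟩
      rw [hrec (m + 2) (by omega) hnj]
      rw [show m + 2 - 1 = m + 1 from rfl, ih (by omega) (by omega)]
      rw [show m + 1 - 1 = m from rfl,
        Finset.prod_Icc_succ_top (show 1 ≤ m + 1 by omega)]
      ring

lemma sum_I (j : ℕ) (γ : ℝ) (α μ : ℕ → ℝ) (I : ℕ → ℝ) (I1 : ℝ)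
    (hI : ∀ k, 1 ≤ k → k ≤ j → I k = (∏ l ∈ Icc 1 (k - 1), ccoef j γ α μ l) * I1) :
    ∑ k ∈ Icc 1 j, I k = xiSum j γ α μ * I1 := by
  rw [xiSum, Finset.sum_mul]
  refine Finset.sum_congr rfl fun k hk => ?_
  simp only [Finset.mem_Icc] at hk
  rw [hI k hk.1 hk.2, prod_range_ccoef j γ α μ k hk.1]

lemma host_alg (μs Sb f cv It' : ℝ) (hμs : 0 < μs) (hSb : 0 < Sb) (hf : 0 < f)
    (hcv : 0 < cv) (h : 0 ≤ It') :
    μs * (Sb - μs * Sb / (μs + f * cv * It' / Sb)) =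
      f * cv * It' * (μs * Sb / (μs + f * cv * It' / Sb)) / Sb := by
  have h0 : 0 ≤ f * cv * It' / Sb := by positivity
  have hE : 0 < μs + f * cv * It' / Sb := by linarith
  field_simp
  ring

lemma vec_alg (μts Sbv f c I1 Sb ξ : ℝ) (hSb : 0 < Sb)
    (hD : 0 < μts + f * c * I1 / Sb * ξ) :
    μts * (Sbv - μts * Sbv / (μts + f * c * I1 / Sb * ξ)) =
      f * c * (μts * Sbv / (μts + f * c * I1 / Sb * ξ)) / Sb * (ξ * I1) := by
  have h2 : 0 < μts * Sb + f * c * I1 * ξ := by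
    have h3 : (μts + f * c * I1 / Sb * ξ) * Sb = μts * Sb + f * c * I1 * ξ := by
      field_simp
    nlinarith [mul_pos hD hSb]
  field_simp [h2.ne']
  ring

/-- For every fixed `I_1 ≥ 0` there exist unique
`S, S̃, R, I_2, …, I_j, Ĩ` satisfying all the equilibrium equations except the
`I_1`-balance equation; explicitly `I_k = c_{k−1}⋯c_1·I_1`, `R = (γ/μ_r)·c_{j−1}⋯c_1·I_1`,
`S̃ = μ̃_s·S̄_v/(μ̃_s + (f·c·I_1/S̄)·ξ)`, `Ĩ = S̄_v − S̃`, and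
`S = μ_s·S̄/(μ_s + f·c_v·Ĩ/S̄)`. -/
theorem stmt2 (j : ℕ) (hj : 2 ≤ j)
    (f c cv γ Sb Sbv μs μr μts μt : ℝ) (α μ : ℕ → ℝ)
    (hf : 0 < f) (hc : 0 < c) (hcv : 0 < cv) (hγ : 0 < γ)
    (hSb : 0 < Sb) (hSbv : 0 < Sbv) (hμs : 0 < μs) (hμr : 0 < μr)
    (hμts : 0 < μts) (hμt : 0 < μt)
    (hα : ∀ k, 1 ≤ k → k ≤ j - 1 → 0 < α k)
    (hμ : ∀ k, 1 ≤ k → k ≤ j → 0 < μ k)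
    (hμeq : μt = μts)
    (I1 : ℝ) (hI1 : 0 ≤ I1) :
    (∃ S R St It : ℝ, ∃ I : ℕ → ℝ, I 1 = I1 ∧
        IsEquilibNoI1 j f c cv γ Sb Sbv μs μr μts μt α μ S R St It I) ∧
    (∀ S R St It : ℝ, ∀ I : ℕ → ℝ, I 1 = I1 →
        IsEquilibNoI1 j f c cv γ Sb Sbv μs μr μts μt α μ S R St It I →
        St = μts * Sbv / (μts + f * c * I1 / Sb * xiSum j γ α μ) ∧
        It = Sbv - μts * Sbv / (μts + f * c * I1 / Sb * xiSum j γ α μ) ∧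
        S = μs * Sb /
          (μs + f * cv * (Sbv - μts * Sbv / (μts + f * c * I1 / Sb * xiSum j γ α μ)) / Sb) ∧
        R = γ / μr * (∏ l ∈ Icc 1 (j - 1), ccoef j γ α μ l) * I1 ∧
        ∀ k, 2 ≤ k → k ≤ j → I k = (∏ l ∈ Icc 1 (k - 1), ccoef j γ α μ l) * I1) := by
  have hξ : 0 < xiSum j γ α μ := xiSum_pos j hj γ α μ hγ hα hμ
  have hnn : 0 ≤ f * c * I1 / Sb * xiSum j γ α μ := by positivity
  have hD : 0 < μts + f * c * I1 / Sb * xiSum j γ α μ := by linarith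
  have hStle : μts * Sbv / (μts + f * c * I1 / Sb * xiSum j γ α μ) ≤ Sbv := by
    rw [div_le_iff₀ hD]
    nlinarith [mul_nonneg hSbv.le hnn]
  have hIt0 : 0 ≤ Sbv - μts * Sbv / (μts + f * c * I1 / Sb * xiSum j γ α μ) := by linarith
  constructor
  · -- existence
    refine ⟨μs * Sb /
        (μs + f * cv * (Sbv - μts * Sbv / (μts + f * c * I1 / Sb * xiSum j γ α μ)) / Sb),
      γ / μr * (∏ l ∈ Icc 1 (j - 1), ccoef j γ α μ l) * I1,
      μts * Sbv / (μts + f * c * I1 / Sb * xiSum j γ α μ),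
      Sbv - μts * Sbv / (μts + f * c * I1 / Sb * xiSum j γ α μ),
      fun k => (∏ l ∈ Icc 1 (k - 1), ccoef j γ α μ l) * I1,
      by simp, ?_, ?_, ?_, ?_, ?_, ?_, rfl⟩
    · exact host_alg μs Sb f cv _ hμs hSb hf hcv hIt0
    · -- recurrence
      intro k hk2 hkj
      obtain ⟨m, rfl⟩ : ∃ m, k = m + 2 := ⟨k - 2, by omega⟩
      have hden : 0 < α (m + 2) + μ (m + 2) := by
        have := hα (m + 2) (by omega) (by omega)
        have := hμ (m + 2) (by omega) (by omega)
        linarith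
      have hcc : ccoef j γ α μ (m + 1) = α (m + 1) / (α (m + 2) + μ (m + 2)) := by
        unfold ccoef
        rw [if_neg (by omega), if_neg (by omega)]
      simp only [show m + 2 - 1 = m + 1 from rfl, show m + 1 - 1 = m from rfl]
      rw [Finset.prod_Icc_succ_top (show 1 ≤ m + 1 by omega), hcc]
      field_simp
    · -- j-th equation
      have hden : 0 < γ + μ j := by linarith [hμ j (by omega) le_rfl]
      have hcc : ccoef j γ α μ (j - 1) = α (j - 1) / (γ + μ j) := by
        unfold ccoef
        rw [if_neg (by omega), if_pos rfl]
      have hjj : j - 1 = (j - 2) + 1 := by omega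
      have hjj2 : j - 1 - 1 = j - 2 := by omega
      simp only [hjj2]
      rw [show (Icc 1 (j-1) : Finset ℕ) = Icc 1 ((j-2)+1) by rw [← hjj],
        Finset.prod_Icc_succ_top (show 1 ≤ (j-2)+1 by omega), ← hjj, hcc]
      field_simp
    · -- R equation
      field_simp
    · -- vector susceptible equation
      rw [sum_I j γ α μ _ I1 (fun k _ _ => rfl)]
      exact vec_alg μts Sbv f c I1 Sb _ hSb hD
    · -- vector infected equation
      rw [sum_I j γ α μ _ I1 (fun k _ _ => rfl), hμeq]
      exact (vec_alg μts Sbv f c I1 Sb _ hSb hD).symm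
  · -- uniqueness
    intro S R St It I hI1eq heq
    obtain ⟨h1, h2, h3, h4, h5, h6, h7⟩ := heq
    have hrec : ∀ k, 2 ≤ k → k ≤ j → I k = ccoef j γ α μ (k - 1) * I (k - 1) := by
      intro k hk2 hkj
      by_cases hkj' : k = j
      · rw [hkj']
        have hden : 0 < γ + μ j := by linarith [hμ j (by omega) le_rfl]
        have hcc : ccoef j γ α μ (j - 1) = α (j - 1) / (γ + μ j) := by
          unfold ccoef
          rw [if_neg (by omega), if_pos rfl]
        rw [hcc, div_mul_eq_mul_div, eq_div_iff hden.ne']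
        linear_combination -h3
      · have hden : 0 < α k + μ k := by
          have := hα k (by omega) (by omega)
          have := hμ k (by omega) (by omega)
          linarith
        have hcc : ccoef j γ α μ (k - 1) = α (k - 1) / (α k + μ k) := by
          unfold ccoef
          rw [if_neg (by omega), if_neg (by omega), show k - 1 + 1 = k by omega]
        rw [hcc, div_mul_eq_mul_div, eq_div_iff hden.ne']
        linear_combination -(h2 k hk2 (by omega))
    have hform := I_formula j γ α μ I I1 hI1eq hrec
    have hsum : ∑ k ∈ Icc 1 j, I k = xiSum j γ α μ * I1 :=
      sum_I j γ α μ I I1 (fun k hk1 hk2 => hform k hk1 hk2)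
    rw [hsum] at h5
    have hSt : St = μts * Sbv / (μts + f * c * I1 / Sb * xiSum j γ α μ) := by
      rw [eq_div_iff hD.ne']
      linear_combination -h5
    have hIt : It = Sbv - μts * Sbv / (μts + f * c * I1 / Sb * xiSum j γ α μ) := by
      rw [h7, hSt]
    have hItnn : 0 ≤ It := by rw [hIt]; exact hIt0
    have hE' : 0 < μs + f * cv * It / Sb := by
      have : 0 ≤ f * cv * It / Sb := by positivity
      linarith
    have hS : S = μs * Sb / (μs + f * cv * It / Sb) := by
      rw [eq_div_iff hE'.ne']
      linear_combination -h1
    rw [hIt] at hS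
    have h4' : γ * ((∏ l ∈ Icc 1 (j - 1), ccoef j γ α μ l) * I1) = μr * R := by
      rw [← hform j (by omega) le_rfl]; exact h4
    have hR : R = γ / μr * (∏ l ∈ Icc 1 (j - 1), ccoef j γ α μ l) * I1 := by
      field_simp
      linear_combination -h4'
    exact ⟨hSt, hIt, hS, hR, fun k hk2 hkj => hform k (by omega) hkj⟩
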